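/- Let N ≥ 2 and p(x) = ∑_{k=0}^{N−1} a_k x^k a real polynomial of degree at most N−1. Then for x > 0, the N-th derivative of x ↦ p(x) ln(x) equals x^{−N} ∑_{j=0}^{N−1} (−1)^{N−1+j} c_j a_j x^j for some positive constants c_0, …, c_{N−1} (depending only on N and j, not on p). -/

import Mathlib

open Finset

/-- Rational-part coefficients in the derivatives of `x^k log x`. -/
noncomputable def Bc (k : ℕ) : ℕ → ℝ
  | 0 => 0
  | (n+1) => (k.descFactorial n : ℝ) + ((k : ℝ) - n) * Bc k n

lemma descFactorial_cast_succ (k n : ℕ) :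
    ((k.descFactorial (n+1) : ℕ) : ℝ) = ((k : ℝ) - n) * k.descFactorial n := by
  rcases le_or_gt n k with h | h
  · rw [Nat.descFactorial_succ]
    push_cast [h]
    ring
  · rw [Nat.descFactorial_eq_zero_iff_lt.mpr h,
      Nat.descFactorial_eq_zero_iff_lt.mpr (h.trans (Nat.lt_succ_self n))]
    simp

lemma Bc_eq (k n : ℕ) (h : k < n) :
    Bc k n = (-1 : ℝ) ^ (n - 1 - k) * k.factorial * (n - 1 - k).factorial := by
  induction n with
  | zero => omega
  | succ n ih =>
    rcases Nat.lt_or_ge k n with hk | hk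
    · rw [show Bc k (n+1) = (k.descFactorial n : ℝ) + ((k : ℝ) - n) * Bc k n from rfl,
        Nat.descFactorial_eq_zero_iff_lt.mpr hk, ih hk]
      have h1 : n + 1 - 1 - k = (n - 1 - k) + 1 := by omega
      have h2 : (n + 1 - 1 - k).factorial = (n - k) * (n - 1 - k).factorial := by
        rw [h1, Nat.factorial_succ]
        congr 1
        omega
      rw [h2, h1]
      have h3 : ((k : ℝ) - n) = -((n - k : ℕ) : ℝ) := by
        push_cast [hk.le]
        ring
      rw [h3]
      push_cast
      ring
    · have hk' : k = n := by omega
      subst hk'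
      rw [show Bc k (k+1) = (k.descFactorial k : ℝ) + ((k : ℝ) - k) * Bc k k from rfl,
        Nat.descFactorial_self]
      simp

/-- Main induction: explicit formula for iterated derivatives of `p(t) log t` on `(0,∞)`. -/
lemma key (N : ℕ) (a : ℕ → ℝ) (n : ℕ) :
    ∀ x : ℝ, 0 < x →
      deriv^[n] (fun t : ℝ => (∑ k ∈ Finset.range N, a k * t ^ k) * Real.log t) x
        = ∑ k ∈ Finset.range N,
            a k * ((k.descFactorial n : ℝ) * Real.log x + Bc k n) * x ^ ((k : ℤ) - n) := by
  induction n with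
  | zero =>
    intro x hx
    simp only [Function.iterate_zero_apply, Nat.descFactorial_zero, Nat.cast_one,
      Nat.cast_zero, Bc]
    rw [Finset.sum_mul]
    refine Finset.sum_congr rfl fun k _ => ?_
    rw [show ((k : ℤ) - 0) = (k : ℤ) from by ring, zpow_natCast]
    ring
  | succ n ih =>
    intro x hx
    rw [Function.iterate_succ_apply']
    have hev : deriv^[n] (fun t : ℝ => (∑ k ∈ Finset.range N, a k * t ^ k) * Real.log t)
        =ᶠ[nhds x] fun y : ℝ => ∑ k ∈ Finset.range N,
            a k * ((k.descFactorial n : ℝ) * Real.log y + Bc k n) * y ^ ((k : ℤ) - n) := by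
      filter_upwards [Ioi_mem_nhds hx] with y hy
      exact ih y hy
    rw [hev.deriv_eq]
    have hd : HasDerivAt (fun y : ℝ => ∑ k ∈ Finset.range N,
        a k * ((k.descFactorial n : ℝ) * Real.log y + Bc k n) * y ^ ((k : ℤ) - n))
        (∑ k ∈ Finset.range N,
          ((a k * ((k.descFactorial n : ℝ) * x⁻¹)) * x ^ ((k : ℤ) - n)
            + (a k * ((k.descFactorial n : ℝ) * Real.log x + Bc k n))
              * ((((k : ℤ) - n : ℤ) : ℝ) * x ^ ((k : ℤ) - n - 1)))) x := by
      refine HasDerivAt.fun_sum fun k _ => ?_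
      have hlog : HasDerivAt Real.log x⁻¹ x := Real.hasDerivAt_log hx.ne'
      have h1 : HasDerivAt (fun y : ℝ => (k.descFactorial n : ℝ) * Real.log y + Bc k n)
          ((k.descFactorial n : ℝ) * x⁻¹) x := (hlog.const_mul _).add_const _
      have h2 : HasDerivAt (fun y : ℝ => y ^ ((k : ℤ) - n))
          ((((k : ℤ) - n : ℤ) : ℝ) * x ^ ((k : ℤ) - n - 1)) x :=
        hasDerivAt_zpow _ x (Or.inl hx.ne')
      exact (h1.const_mul (a k)).mul h2
    rw [hd.deriv]
    refine Finset.sum_congr rfl fun k _ => ?_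
    have hm : x ^ ((k : ℤ) - n) = x ^ ((k : ℤ) - n - 1) * x := by
      rw [← zpow_add_one₀ hx.ne']
      congr 1
      ring
    rw [hm, descFactorial_cast_succ,
      show Bc k (n+1) = (k.descFactorial n : ℝ) + ((k : ℝ) - n) * Bc k n from rfl,
      show ((k : ℤ) - (n + 1 : ℕ) : ℤ) = (k : ℤ) - n - 1 from by push_cast; ring]
    have hcast : ((((k : ℤ) - n : ℤ)) : ℝ) = (k : ℝ) - n := by push_cast; ring
    rw [hcast]
    field_simp
    ring

/-- For `N ≥ 2` there exist positive constants `c_0, …, c_{N-1}` (depending only on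
`N` and `j`, not on the polynomial) such that for every polynomial
`p(x) = ∑_{k<N} a_k x^k` and every `x > 0`, the `N`-th derivative of `x ↦ p(x) ln x`
equals `x^{-N} ∑_{j<N} (-1)^{N-1+j} c_j a_j x^j`. -/
theorem iteratedDeriv_poly_mul_log (N : ℕ) (hN : 2 ≤ N) :
    ∃ c : ℕ → ℝ, (∀ j < N, 0 < c j) ∧
      ∀ a : ℕ → ℝ, ∀ x : ℝ, 0 < x →
        iteratedDeriv N
            (fun t : ℝ => (∑ k ∈ Finset.range N, a k * t ^ k) * Real.log t) x =
          (x ^ N)⁻¹ *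
            ∑ j ∈ Finset.range N, (-1 : ℝ) ^ (N - 1 + j) * c j * a j * x ^ j := by
  refine ⟨fun j => (j.factorial : ℝ) * ((N - 1 - j).factorial : ℝ), ?_, ?_⟩
  · intro j _
    positivity
  · intro a x hx
    rw [iteratedDeriv_eq_iterate, key N a N x hx, Finset.mul_sum]
    refine Finset.sum_congr rfl fun k hk => ?_
    rw [Finset.mem_range] at hk
    rw [Nat.descFactorial_eq_zero_iff_lt.mpr hk, Bc_eq k N hk]
    have hz : x ^ ((k : ℤ) - N) = (x ^ N)⁻¹ * x ^ k := by
      rw [zpow_sub₀ hx.ne', zpow_natCast, zpow_natCast]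
      ring
    rw [hz]
    have hsign : (-1 : ℝ) ^ (N - 1 + k) = (-1 : ℝ) ^ (N - 1 - k) := by
      rw [show N - 1 + k = (N - 1 - k) + 2 * k from by omega, pow_add, pow_mul]
      simp
    rw [hsign]
    push_cast
    ring
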